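/- arXiv:1705.09134 — 3 statements merged into one kernel-verified Lean document; each statement's English description precedes it below -/
import Mathlib

section
/- Let E be a complex Hilbert space with a self-adjoint unitary involution ε (a ℤ/2-grading). Suppose A : E → E is a bounded skew-adjoint operator (A* = -A) such that A² + 1 is compact. Then the operator -e^{πA} - 1 is compact, and η := -e^{πA} ε satisfies: η is self-adjoint, η² = 1, and η - ε is compact, provided Aε = -εA. -/
open ContinuousLinearMap NormedSpace Nat

section Stmt7Aux

variable {E : Type*} [NormedAddCommGroup E] [InnerProductSpace ℂ E] [CompleteSpace E]

lemma stmt7_cpt_mul_left (T : E →L[ℂ] E) {C : E →L[ℂ] E} (hC : IsCompactOperator (C : E →L[ℂ] E)) :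
    IsCompactOperator (T * C : E →L[ℂ] E) :=
  hC.continuous_comp T.continuous

lemma stmt7_cpt_mul_right {C : E →L[ℂ] E} (hC : IsCompactOperator (C : E →L[ℂ] E))
    (T : E →L[ℂ] E) : IsCompactOperator (C * T : E →L[ℂ] E) :=
  hC.comp_clm T

lemma stmt7_pow_even {A : E →L[ℂ] E} (hcpt : IsCompactOperator (A * A + 1 : E →L[ℂ] E)) :
    ∀ k : ℕ, IsCompactOperator ((A ^ (2 * k) - ((-1 : ℂ) ^ k) • 1 : E →L[ℂ] E))
  | 0 => by simpa using isCompactOperator_zero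
  | (k + 1) => by
    have ih := stmt7_pow_even hcpt k
    have h1 : IsCompactOperator ((A ^ (2 * k) - ((-1 : ℂ) ^ k) • 1) * (A * A) : E →L[ℂ] E) :=
      stmt7_cpt_mul_right ih _
    have h2 : IsCompactOperator (((-1 : ℂ) ^ k) • (A * A + 1) : E →L[ℂ] E) := hcpt.smul _
    have h3 := h1.add h2
    have hpow : A ^ (2 * (k + 1)) = A ^ (2 * k) * (A * A) := by
      rw [show 2 * (k + 1) = 2 * k + 1 + 1 by ring, pow_succ, pow_succ, mul_assoc]
    have heq : (A ^ (2 * (k + 1)) - ((-1 : ℂ) ^ (k + 1)) • 1 : E →L[ℂ] E)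
        = (A ^ (2 * k) - ((-1 : ℂ) ^ k) • 1) * (A * A) + ((-1 : ℂ) ^ k) • (A * A + 1) := by
      rw [hpow, sub_mul, smul_mul_assoc, one_mul, smul_add]
      match_scalars <;> ring
    rw [heq]
    exact h3

lemma stmt7_pow_odd {A : E →L[ℂ] E} (hcpt : IsCompactOperator (A * A + 1 : E →L[ℂ] E)) (k : ℕ) :
    IsCompactOperator ((A ^ (2 * k + 1) - ((-1 : ℂ) ^ k) • A : E →L[ℂ] E)) := by
  have heq : (A ^ (2 * k + 1) - ((-1 : ℂ) ^ k) • A : E →L[ℂ] E)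
      = (A ^ (2 * k) - ((-1 : ℂ) ^ k) • 1) * A := by
    rw [sub_mul, smul_mul_assoc, one_mul, ← pow_succ]
  rw [heq]
  exact stmt7_cpt_mul_right (stmt7_pow_even hcpt k) A

end Stmt7Aux

/-- Let `E` be a complex Hilbert space with a self-adjoint unitary involution `ε`
(a `ℤ/2`-grading), and let `A` be a bounded skew-adjoint operator (`A* = -A`) such that
`A² + 1` is compact and `Aε = -εA`.  Then `-e^{πA} - 1` is compact, and
`η := -e^{πA} ε` is self-adjoint, satisfies `η² = 1`, and `η - ε` is compact. -/
theorem stmt7 {E : Type*} [NormedAddCommGroup E] [InnerProductSpace ℂ E] [CompleteSpace E]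
    (ε A : E →L[ℂ] E)
    (hεsa : adjoint ε = ε) (hε2 : ε * ε = 1)
    (hA : adjoint A = -A)
    (hcpt : IsCompactOperator (A * A + 1 : E →L[ℂ] E))
    (hodd : A * ε = -(ε * A)) :
    IsCompactOperator
      ((-(NormedSpace.exp ((Real.pi : ℂ) • A)) - 1 : E →L[ℂ] E)) ∧
    adjoint (-(NormedSpace.exp ((Real.pi : ℂ) • A)) * ε) =
      -(NormedSpace.exp ((Real.pi : ℂ) • A)) * ε ∧
    (-(NormedSpace.exp ((Real.pi : ℂ) • A)) * ε) *
      (-(NormedSpace.exp ((Real.pi : ℂ) • A)) * ε) = 1 ∧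
    IsCompactOperator
      ((-(NormedSpace.exp ((Real.pi : ℂ) • A)) * ε - ε : E →L[ℂ] E)) := by
  classical
  set π' : ℂ := (Real.pi : ℂ) with hπ'
  have hexp : HasSum (fun n : ℕ => ((n ! : ℂ))⁻¹ • (π' • A) ^ n) (exp (π' • A)) :=
    exp_series_hasSum_exp' _
  set g : ℕ → (E →L[ℂ] E) := fun n =>
    if Even n then (((-1 : ℂ) ^ (n / 2) * π' ^ n / (n ! : ℂ))) • (1 : E →L[ℂ] E)
    else (((-1 : ℂ) ^ (n / 2) * π' ^ n / (n ! : ℂ))) • A with hgdef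
  have hgeven : ∀ k : ℕ, g (2 * k) = ((-1 : ℂ) ^ k * π' ^ (2 * k) / ((2 * k)! : ℂ)) • 1 := by
    intro k
    simp [hgdef, Nat.mul_div_cancel_left k two_pos, even_two_mul, mul_div_assoc]
  have hgodd : ∀ k : ℕ, g (2 * k + 1)
      = ((-1 : ℂ) ^ k * π' ^ (2 * k + 1) / ((2 * k + 1)! : ℂ)) • A := by
    intro k
    have h2 : ¬ Even (2 * k + 1) := by simp [Nat.even_add_one, Nat.even_mul]
    have h3 : (2 * k + 1) / 2 = k := by omega
    simp [hgdef, h2, h3]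
  have hg : HasSum g ((Complex.cos π') • (1 : E →L[ℂ] E) + (Complex.sin π') • A) := by
    refine HasSum.even_add_odd ?_ ?_
    · have h := (Complex.hasSum_cos π').smul_const (1 : E →L[ℂ] E)
      simpa only [hgeven] using h
    · have h := (Complex.hasSum_sin π').smul_const A
      simpa only [hgodd] using h
  have hdiff : HasSum (fun n : ℕ => ((n ! : ℂ))⁻¹ • (π' • A) ^ n - g n)
      (exp (π' • A) - ((Complex.cos π') • (1 : E →L[ℂ] E) + (Complex.sin π') • A)) :=
    hexp.sub hg
  have hterm : ∀ n : ℕ,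
      IsCompactOperator ((((n ! : ℂ))⁻¹ • (π' • A) ^ n - g n : E →L[ℂ] E)) := by
    intro n
    rcases Nat.even_or_odd n with he | ho
    · obtain ⟨k, hk⟩ := he
      have hk' : n = 2 * k := by omega
      subst hk'
      have heq : (((2 * k)! : ℂ))⁻¹ • (π' • A) ^ (2 * k) - g (2 * k)
          = ((π' ^ (2 * k) / ((2 * k)! : ℂ))) • (A ^ (2 * k) - ((-1 : ℂ) ^ k) • 1) := by
        rw [hgeven, smul_pow]
        match_scalars <;> ring
      rw [heq]
      exact (stmt7_pow_even hcpt k).smul _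
    · obtain ⟨k, hk⟩ := ho
      subst hk
      have heq : (((2 * k + 1)! : ℂ))⁻¹ • (π' • A) ^ (2 * k + 1) - g (2 * k + 1)
          = ((π' ^ (2 * k + 1) / ((2 * k + 1)! : ℂ))) • (A ^ (2 * k + 1) - ((-1 : ℂ) ^ k) • A) := by
        rw [hgodd, smul_pow]
        match_scalars <;> ring
      rw [heq]
      exact (stmt7_pow_odd hcpt k).smul _
  have hpartial : ∀ s : Finset ℕ,
      IsCompactOperator ((∑ n ∈ s, (((n ! : ℂ))⁻¹ • (π' • A) ^ n - g n) : E →L[ℂ] E)) := by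
    intro s
    induction s using Finset.induction_on with
    | empty => simpa using isCompactOperator_zero
    | insert _ _ hns ih =>
      rw [Finset.sum_insert hns]
      exact (hterm _).add ih
  have hS : IsCompactOperator
      ((exp (π' • A) - ((Complex.cos π') • (1 : E →L[ℂ] E) + (Complex.sin π') • A)
        : E →L[ℂ] E)) := by
    refine isCompactOperator_of_tendsto hdiff ?_
    exact Filter.Eventually.of_forall hpartial
  have hcos : Complex.cos π' = -1 := by
    rw [hπ', ← Complex.ofReal_cos, Real.cos_pi]
    norm_num
  have hsin : Complex.sin π' = 0 := by
    rw [hπ', ← Complex.ofReal_sin, Real.sin_pi]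
    norm_num
  have hK : IsCompactOperator ((exp (π' • A) + 1 : E →L[ℂ] E)) := by
    rw [hcos, hsin] at hS
    simpa [sub_eq_add_neg] using hS
  have goal1 : IsCompactOperator ((-(exp (π' • A)) - 1 : E →L[ℂ] E)) := by
    have h := hK.neg
    have heq : (-(exp (π' • A)) - 1 : E →L[ℂ] E) = -(exp (π' • A) + 1) := by
      rw [neg_add, sub_eq_add_neg]
    rw [heq]
    exact h
  -- star facts
  have hstarε : star ε = ε := (ContinuousLinearMap.star_eq_adjoint ε).trans hεsa
  have hstarA : star A = -A := (ContinuousLinearMap.star_eq_adjoint A).trans hA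
  have hεAε : ε * A * ε = -A := by
    rw [mul_assoc, hodd, mul_neg, ← mul_assoc, hε2, one_mul]
  set u : (E →L[ℂ] E)ˣ := ⟨ε, ε, hε2, hε2⟩ with hu
  have key : ∀ c : ℂ, ε * exp (c • A) * ε = exp (-(c • A)) := by
    intro c
    let +nondep : NormedAlgebra ℚ (E →L[ℂ] E) := .restrictScalars ℚ ℂ (E →L[ℂ] E)
    have h := exp_units_conj u (c • A)
    have hcoe : ((u : (E →L[ℂ] E)ˣ) : E →L[ℂ] E) = ε := rfl
    have hcoe' : (((u⁻¹ : (E →L[ℂ] E)ˣ)) : E →L[ℂ] E) = ε := rfl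
    rw [hcoe, hcoe'] at h
    have harg : ε * (c • A) * ε = -(c • A) := by
      rw [mul_smul_comm, smul_mul_assoc, hεAε, smul_neg]
    rw [harg] at h
    exact h.symm
  have hcomm : ∀ c : ℂ, ε * exp (c • A) = exp (-(c • A)) * ε := by
    intro c
    calc ε * exp (c • A) = (ε * exp (c • A) * ε) * ε := by
          rw [mul_assoc, hε2, mul_one]
      _ = exp (-(c • A)) * ε := by rw [key c]
  have hstarexp : star (exp (π' • A)) = exp (-(π' • A)) := by
    rw [star_exp, star_smul, hstarA]
    congr 1
    rw [hπ']
    simp [Complex.conj_ofReal]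
  have goal2 : adjoint (-(exp (π' • A)) * ε) = -(exp (π' • A)) * ε := by
    rw [← ContinuousLinearMap.star_eq_adjoint, star_mul, hstarε, star_neg, hstarexp]
    have h1 : ε * exp (-(π' • A)) = exp (π' • A) * ε := by
      have := hcomm (-π')
      rw [neg_smul] at this
      rw [this, neg_neg]
    rw [mul_neg, h1, neg_mul]
  have goal3 : (-(exp (π' • A)) * ε) * (-(exp (π' • A)) * ε) = 1 := by
    have h1 : (-(exp (π' • A)) * ε) * (-(exp (π' • A)) * ε)
        = exp (π' • A) * (ε * exp (π' • A) * ε) := by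
      rw [neg_mul, neg_mul_neg]
      simp only [mul_assoc]
    let +nondep : NormedAlgebra ℚ (E →L[ℂ] E) := .restrictScalars ℚ ℂ (E →L[ℂ] E)
    rw [h1, key π', ← exp_add_of_commute ((Commute.refl (π' • A)).neg_right),
      add_neg_cancel, exp_zero]
  have goal4 : IsCompactOperator
      ((-(exp (π' • A)) * ε - ε : E →L[ℂ] E)) := by
    have heq : (-(exp (π' • A)) * ε - ε : E →L[ℂ] E)
        = (-(exp (π' • A)) - 1) * ε := by
      rw [sub_mul, one_mul]
    rw [heq]
    exact stmt7_cpt_mul_right goal1 ε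
  exact ⟨goal1, goal2, goal3, goal4⟩
end

section
/- Let X be a compact topological space, ℰ a separable Hilbert space, and (K_x)_{x∈X} a family of self-adjoint compact operators on ℰ depending norm-continuously on x. Then for every r > 0 there exists a finite-dimensional subspace ℱ ⊆ ℰ such that, with P the orthogonal projection onto ℱ, ‖K_x - P K_x‖ < r for all x ∈ X. -/
open ContinuousLinearMap

/-- Let `X` be a compact (Hausdorff) space, `ℰ` a separable Hilbert space, and
`(K_x)_{x ∈ X}` a norm-continuous family of self-adjoint compact operators on `ℰ`.
Then for every `r > 0` there is a finite-dimensional subspace `ℱ ⊆ ℰ` such that the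
orthogonal projection `P` onto `ℱ` (characterized as the self-adjoint idempotent with
range `ℱ`) satisfies `‖K_x - P K_x‖ < r` for all `x ∈ X`. -/
theorem stmt9 {X : Type*} [TopologicalSpace X] [CompactSpace X] [T2Space X]
    {E : Type*} [NormedAddCommGroup E] [InnerProductSpace ℂ E] [CompleteSpace E]
    [TopologicalSpace.SeparableSpace E]
    (K : X → E →L[ℂ] E) (hcont : Continuous K)
    (hsa : ∀ x, adjoint (K x) = K x)
    (hcpt : ∀ x, IsCompactOperator (K x))
    (r : ℝ) (hr : 0 < r) :
    ∃ F : Submodule ℂ E, FiniteDimensional ℂ F ∧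
      ∃ P : E →L[ℂ] E, adjoint P = P ∧ P * P = P ∧ LinearMap.range (P : E →ₗ[ℂ] E) = F ∧
        ∀ x, ‖K x - P * K x‖ < r := by
  have hr4 : 0 < r / 4 := by linarith
  -- finite (r/4)-net for the operators K x
  have hKcomp : IsCompact (K '' Set.univ) := isCompact_univ.image hcont
  obtain ⟨t, ht⟩ := hKcomp.elim_finite_subcover (fun x : X => Metric.ball (K x) (r / 4))
    (fun _ => Metric.isOpen_ball) (by
      rintro y ⟨x, -, rfl⟩
      exact Set.mem_iUnion.2 ⟨x, Metric.mem_ball_self hr4⟩)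
  -- for each x, a finite (r/4)-net for the image of the unit ball under K x
  have hnet : ∀ x : X, ∃ s : Finset E,
      (K x '' Metric.closedBall 0 1) ⊆ ⋃ w ∈ s, Metric.ball w (r / 4) := by
    intro x
    have hc : IsCompact (closure <| K x '' Metric.closedBall 0 1) :=
      IsCompactOperator.isCompact_closure_image_closedBall (𝕜₁ := ℂ)
        (f := (K x).toLinearMap) (hcpt x) 1
    obtain ⟨s, hs⟩ := hc.elim_finite_subcover (fun w : E => Metric.ball w (r / 4))
      (fun _ => Metric.isOpen_ball) (by
        intro y _
        exact Set.mem_iUnion.2 ⟨y, Metric.mem_ball_self hr4⟩)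
    exact ⟨s, subset_closure.trans hs⟩
  choose s hs using hnet
  -- the finite-dimensional subspace
  set S : Set E := ⋃ x ∈ t, (s x : Set E) with hS
  have hSfin : S.Finite := Set.Finite.biUnion t.finite_toSet fun x _ => (s x).finite_toSet
  set F : Submodule ℂ E := Submodule.span ℂ S with hF
  haveI : FiniteDimensional ℂ F := FiniteDimensional.span_of_finite ℂ hSfin
  haveI : CompleteSpace F := FiniteDimensional.complete ℂ F
  set P : E →L[ℂ] E := F.subtypeL ∘L F.orthogonalProjectionOnto with hP
  refine ⟨F, inferInstance, P, ?_, ?_, ?_, ?_⟩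
  · exact (isSelfAdjoint_starProjection F).adjoint_eq
  · ext v
    simp [hP, Submodule.orthogonalProjectionOnto_mem_subspace_eq_self, Submodule.starProjection_eq_self_iff.2 (F.starProjection_apply_mem v)]
  · apply le_antisymm
    · rintro _ ⟨v, rfl⟩
      exact (F.orthogonalProjectionOnto v).2
    · intro v hv
      exact ⟨v, Submodule.starProjection_eq_self_iff.2 hv⟩
  -- the norm estimate
  · intro x
    -- key pointwise estimate on the unit ball
    have key : ∀ v : E, ‖v‖ ≤ 1 → ‖K x v - P (K x v)‖ ≤ r / 2 := by
      intro v hv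
      obtain ⟨i, hi, hxi⟩ := Set.mem_iUnion₂.1 (ht ⟨x, Set.mem_univ x, rfl⟩)
      have hop : ‖K x - K i‖ < r / 4 := by
        rw [Metric.mem_ball, dist_eq_norm] at hxi
        exact hxi
      have h1 : ‖K x v - K i v‖ ≤ r / 4 := by
        calc ‖K x v - K i v‖ = ‖(K x - K i) v‖ := by simp
          _ ≤ ‖K x - K i‖ * ‖v‖ := le_opNorm _ _
          _ ≤ (r / 4) * 1 := by
              apply mul_le_mul hop.le hv (norm_nonneg _) hr4.le
          _ = r / 4 := mul_one _
      have hKiv : K i v ∈ ⋃ w ∈ s i, Metric.ball w (r / 4) :=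
        hs i ⟨v, by simpa [Metric.mem_closedBall] using hv, rfl⟩
      obtain ⟨w, hw, hww⟩ := Set.mem_iUnion₂.1 hKiv
      rw [Metric.mem_ball, dist_eq_norm] at hww
      have hwF : w ∈ F :=
        Submodule.subset_span (Set.mem_iUnion₂.2 ⟨i, hi, hw⟩)
      -- the orthogonal projection minimizes distance
      have hmin : ‖K x v - P (K x v)‖ ≤ ‖K x v - w‖ := by
        have hmin' := Submodule.starProjection_minimal (U := F) (K x v)
        have : ‖K x v - F.starProjection (K x v)‖ ≤ ‖K x v - (⟨w, hwF⟩ : F)‖ := by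
          rw [hmin']
          exact ciInf_le ⟨0, by rintro _ ⟨z, rfl⟩; positivity⟩ (⟨w, hwF⟩ : F)
        exact this
      calc ‖K x v - P (K x v)‖ ≤ ‖K x v - w‖ := hmin
        _ ≤ ‖K x v - K i v‖ + ‖K i v - w‖ := norm_sub_le_norm_sub_add_norm_sub _ _ _
        _ ≤ r / 4 + r / 4 := add_le_add h1 hww.le
        _ = r / 2 := by ring
    have hbound : ‖K x - P * K x‖ ≤ r / 2 := by
      apply opNorm_le_bound' _ (by linarith)
      intro v hv
      have hvpos : 0 < ‖v‖ := lt_of_le_of_ne (norm_nonneg v) (Ne.symm hv)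
      set u : E := (‖v‖⁻¹ : ℂ) • v with hu
      have hunorm : ‖u‖ = 1 := by
        simp [hu, norm_smul, inv_mul_cancel₀ hv]
      have hvu : v = (‖v‖ : ℂ) • u := by
        rw [hu, smul_smul]
        rw [mul_inv_cancel₀ (by exact_mod_cast hv), one_smul]
      have h2 : ‖(K x - P * K x) v‖ = ‖v‖ * ‖(K x - P * K x) u‖ := by
        conv_lhs => rw [hvu]
        rw [map_smul, norm_smul]
        simp
      rw [h2]
      have h3 : ‖(K x - P * K x) u‖ ≤ r / 2 := by
        have := key u hunorm.le
        simpa [sub_apply, mul_apply] using this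
      calc ‖v‖ * ‖(K x - P * K x) u‖ ≤ ‖v‖ * (r / 2) := by
            exact mul_le_mul_of_nonneg_left h3 (norm_nonneg v)
        _ = r / 2 * ‖v‖ := mul_comm _ _
    linarith
end

section
/- Let X be a compact space, ℰ a separable Hilbert space with an action of the Clifford algebra Cl_{p,q} by bounded operators, and (K_x)_{x∈X} a norm-continuous family of self-adjoint compact operators. Then for any r > 0 there is a finite-dimensional Cl_{p,q}-invariant subspace ℱ ⊆ ℰ such that the orthogonal projection P onto ℱ satisfies ‖K_x - P K_x‖ < r for all x ∈ X. -/
open ContinuousLinearMap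

section cliffordAux

variable {E : Type*} [NormedAddCommGroup E] [InnerProductSpace ℂ E]

/-- The word `γ l₁ * γ l₂ * ⋯` in the operators `γ i`. -/
def cliffWord {n : ℕ} (γ : Fin n → E →L[ℂ] E) (l : List (Fin n)) : E →L[ℂ] E :=
  (l.map γ).prod

@[simp] lemma cliffWord_nil {n : ℕ} (γ : Fin n → E →L[ℂ] E) : cliffWord γ [] = 1 := rfl

lemma cliffWord_cons {n : ℕ} (γ : Fin n → E →L[ℂ] E) (j : Fin n) (l : List (Fin n)) :
    cliffWord γ (j :: l) = γ j * cliffWord γ l := by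
  simp [cliffWord]

end cliffordAux

/-- Multiplying a sorted word by `γ i` on the left: the resulting scalar and sorted word. -/
def cliffIns {n : ℕ} (p : ℕ) (i : Fin n) : List (Fin n) → ℂ × List (Fin n)
  | [] => (1, [i])
  | j :: t =>
    if i < j then (1, i :: j :: t)
    else if i = j then ((if (i : ℕ) < p then -1 else 1), t)
    else (-(cliffIns p i t).1, j :: (cliffIns p i t).2)

lemma cliffIns_mem {n : ℕ} (p : ℕ) (i : Fin n) (l : List (Fin n)) :
    ∀ x ∈ (cliffIns p i l).2, x = i ∨ x ∈ l := by
  induction l with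
  | nil => simp [cliffIns]
  | cons j t ih =>
    intro x hx
    rw [cliffIns] at hx
    by_cases h1 : i < j
    · rw [if_pos h1] at hx
      simp only [List.mem_cons] at hx ⊢
      tauto
    · rw [if_neg h1] at hx
      by_cases h2 : i = j
      · rw [if_pos h2] at hx
        simp only [List.mem_cons] at hx ⊢
        tauto
      · rw [if_neg h2] at hx
        simp only [List.mem_cons] at hx ⊢
        rcases hx with rfl | hx
        · tauto
        · rcases ih x hx with h | h <;> tauto

lemma cliffIns_sorted {n : ℕ} (p : ℕ) (i : Fin n) (l : List (Fin n))
    (hl : l.Pairwise (· < ·)) : (cliffIns p i l).2.Pairwise (· < ·) := by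
  induction l with
  | nil => simp [cliffIns]
  | cons j t ih =>
    rw [List.pairwise_cons] at hl
    obtain ⟨hj, ht⟩ := hl
    rw [cliffIns]
    by_cases h1 : i < j
    · rw [if_pos h1]
      refine List.pairwise_cons.mpr ⟨?_, List.pairwise_cons.mpr ⟨hj, ht⟩⟩
      intro b hb
      rcases List.mem_cons.mp hb with rfl | hb
      · exact h1
      · exact h1.trans (hj b hb)
    · rw [if_neg h1]
      by_cases h2 : i = j
      · rw [if_pos h2]; exact ht
      · rw [if_neg h2]
        have hji : j < i := lt_of_le_of_ne (not_lt.mp h1) fun h => h2 h.symm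
        refine List.pairwise_cons.mpr ⟨?_, ih ht⟩
        intro b hb
        rcases cliffIns_mem p i t b hb with rfl | hb
        · exact hji
        · exact hj b hb

lemma cliff_mul_word {E : Type*} [NormedAddCommGroup E] [InnerProductSpace ℂ E]
    {n : ℕ} (p : ℕ) (γ : Fin n → E →L[ℂ] E)
    (hγa : ∀ i j, i ≠ j → γ i * γ j = -(γ j * γ i))
    (hγs : ∀ i : Fin n, γ i * γ i = if (i : ℕ) < p then -1 else 1)
    (i : Fin n) (l : List (Fin n)) :
    γ i * cliffWord γ l = (cliffIns p i l).1 • cliffWord γ (cliffIns p i l).2 := by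
  induction l with
  | nil => simp [cliffIns, cliffWord_cons]
  | cons j t ih =>
    rw [cliffIns]
    by_cases h1 : i < j
    · rw [if_pos h1]
      simp [cliffWord_cons, mul_assoc]
    · rw [if_neg h1]
      by_cases h2 : i = j
      · rw [if_pos h2]
        subst h2
        rw [cliffWord_cons, ← mul_assoc, hγs i]
        by_cases hp : (i : ℕ) < p
        · rw [if_pos hp, if_pos hp]
          simp
        · rw [if_neg hp, if_neg hp]
          simp
      · rw [if_neg h2]
        rw [cliffWord_cons, ← mul_assoc, hγa i j h2, neg_mul, mul_assoc, ih,
          cliffWord_cons, mul_smul_comm, neg_smul]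

/-- Equivariant finite-dimensional approximation: let `ℰ` be a separable Hilbert space
carrying an action of the Clifford algebra `Cl_{p,q}` by unitary operators `γ i`
(`γᵢγⱼ = -γⱼγᵢ` for `i ≠ j`, `γᵢ² = -1` for `i < p` and `γᵢ² = +1` for `i ≥ p`), let `X`
be a compact (Hausdorff) space and `(K_x)_{x ∈ X}` a norm-continuous family of self-adjoint
compact operators.  Then for every `r > 0` there is a finite-dimensional `Cl_{p,q}`-invariant
subspace `ℱ ⊆ ℰ` such that the orthogonal projection `P` onto `ℱ` satisfies
`‖K_x - P K_x‖ < r` for all `x ∈ X`. -/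
theorem stmt10 {X : Type*} [TopologicalSpace X] [CompactSpace X] [T2Space X]
    {E : Type*} [NormedAddCommGroup E] [InnerProductSpace ℂ E] [CompleteSpace E]
    [TopologicalSpace.SeparableSpace E]
    (p q : ℕ) (γ : Fin (p + q) → E →L[ℂ] E)
    (hγu : ∀ i, adjoint (γ i) * γ i = 1 ∧ γ i * adjoint (γ i) = 1)
    (hγa : ∀ i j, i ≠ j → γ i * γ j = -(γ j * γ i))
    (hγs : ∀ i : Fin (p + q), γ i * γ i = if (i : ℕ) < p then -1 else 1)
    (K : X → E →L[ℂ] E) (hcont : Continuous K)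
    (hsa : ∀ x, adjoint (K x) = K x)
    (hcpt : ∀ x, IsCompactOperator (K x))
    (r : ℝ) (hr : 0 < r) :
    ∃ F : Submodule ℂ E, FiniteDimensional ℂ F ∧
      (∀ i, ∀ v ∈ F, γ i v ∈ F) ∧
      ∃ P : E →L[ℂ] E, adjoint P = P ∧ P * P = P ∧ LinearMap.range (P : E →ₗ[ℂ] E) = F ∧
        ∀ x, ‖K x - P * K x‖ < r := by
  classical
  have hr3 : 0 < r / 3 := by positivity
  -- finite subcover of X
  obtain ⟨t, ht⟩ :=
    (isCompact_univ (X := X)).elim_finite_subcover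
      (fun c => K ⁻¹' Metric.ball (K c) (r / 3))
      (fun c => Metric.isOpen_ball.preimage hcont)
      (fun x _ => Set.mem_iUnion.mpr ⟨x, by simp [Metric.mem_ball, hr3]⟩)
  -- finite nets for each K c
  have hnet : ∀ c : X, ∃ s : Set E, s.Finite ∧
      K c '' Metric.closedBall 0 1 ⊆ ⋃ y ∈ s, Metric.ball y (r / 3) := by
    intro c
    have hcc : IsCompact (closure (K c '' Metric.closedBall 0 1)) :=
      (hcpt c).isCompact_closure_image_closedBall (𝕜₁ := ℂ) 1
    have htb : TotallyBounded (K c '' Metric.closedBall 0 1) :=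
      hcc.totallyBounded.subset subset_closure
    obtain ⟨s, hsf, hs⟩ := Metric.totallyBounded_iff.mp htb (r / 3) hr3
    exact ⟨s, hsf, hs⟩
  choose S hSfin hSsub using hnet
  -- the finite generating sets
  set sVec : Set E := ⋃ c ∈ (t : Set X), S c with hsVecdef
  have hsVecFin : sVec.Finite := t.finite_toSet.biUnion fun c _ => hSfin c
  set sMon : Set (E →L[ℂ] E) :=
    cliffWord γ '' {l : List (Fin (p + q)) | l.Pairwise (· < ·)} with hsMondef
  have hsMonFin : sMon.Finite := by
    apply Set.Finite.image
    apply (List.finite_length_le (Fin (p + q)) (p + q)).subset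
    intro l hl
    have hnd : l.Nodup := List.Pairwise.nodup hl
    simpa using hnd.length_le_card
  set M : Submodule ℂ (E →L[ℂ] E) := Submodule.span ℂ sMon with hMdef
  set F₀ : Submodule ℂ E := Submodule.span ℂ sVec with hF₀def
  -- the bilinear "apply" map
  let B : (E →L[ℂ] E) →ₗ[ℂ] E →ₗ[ℂ] E :=
    LinearMap.mk₂ ℂ (fun T v => T v) (fun T T' v => by simp) (fun c T v => by simp)
      (fun T v v' => by simp) (fun c T v => by simp)
  have hBapp : ∀ (T : E →L[ℂ] E) (v : E), B T v = T v := fun T v => rfl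
  set F : Submodule ℂ E := Submodule.map₂ B M F₀ with hFdef
  have hFeq : F = Submodule.span ℂ (Set.image2 (fun T v => B T v) sMon sVec) := by
    rw [hFdef, hMdef, hF₀def, Submodule.map₂_span_span]
  have hFfin : FiniteDimensional ℂ F := by
    rw [hFeq]
    exact FiniteDimensional.span_of_finite ℂ (Set.Finite.image2 _ hsMonFin hsVecFin)
  -- 1 ∈ M
  have hone : (1 : E →L[ℂ] E) ∈ M :=
    Submodule.subset_span ⟨[], List.Pairwise.nil, rfl⟩
  -- M is stable under left multiplication by γ i
  have hmul : ∀ i, ∀ T ∈ M, γ i * T ∈ M := by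
    intro i T hT
    induction hT using Submodule.span_induction with
    | mem T hT =>
      obtain ⟨l, hl, rfl⟩ := hT
      rw [cliff_mul_word p γ hγa hγs i l]
      exact Submodule.smul_mem _ _
        (Submodule.subset_span ⟨_, cliffIns_sorted p i l hl, rfl⟩)
    | zero => simpa using Submodule.zero_mem M
    | add a b _ _ ha hb => rw [mul_add]; exact Submodule.add_mem _ ha hb
    | smul c a _ ha => rw [mul_smul_comm]; exact Submodule.smul_mem _ _ ha
  -- F is Clifford invariant
  have hInv : ∀ i, ∀ v ∈ F, γ i v ∈ F := by
    intro i v hv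
    have hle : Submodule.map₂ B M F₀ ≤ F.comap ((γ i).toLinearMap) := by
      rw [Submodule.map₂_le]
      intro T hT u hu
      have hmem : B (γ i * T) u ∈ Submodule.map₂ B M F₀ :=
        Submodule.apply_mem_map₂ B (hmul i T hT) hu
      rw [hBapp] at hmem
      simpa [Submodule.mem_comap, hBapp, ContinuousLinearMap.mul_apply] using hmem
    exact hle hv
  -- F₀ ≤ F
  have hF₀F : F₀ ≤ F := by
    intro u hu
    have hmem := Submodule.apply_mem_map₂ B hone hu
    rw [hBapp] at hmem
    simpa using hmem
  -- the projection
  haveI : CompleteSpace F := FiniteDimensional.complete ℂ F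
  set P : E →L[ℂ] E := F.subtypeL ∘L F.orthogonalProjectionOnto with hPdef
  have hPapply : ∀ v, P v = (F.orthogonalProjectionOnto v : E) := fun v => rfl
  have hPy : ∀ y ∈ F, P y = y := fun y hy => by
    rw [hPapply, ← Submodule.starProjection_apply, Submodule.starProjection_eq_self_iff.mpr hy]
  have hproj_le : ∀ v : E, ‖v - P v‖ ≤ ‖v‖ := by
    intro v
    rw [hPapply, ← Submodule.starProjection_apply, ← Submodule.starProjection_orthogonal_val]
    calc ‖((Fᗮ.orthogonalProjectionOnto v : Fᗮ) : E)‖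
        = ‖Fᗮ.orthogonalProjectionOnto v‖ := rfl
      _ ≤ ‖Fᗮ.orthogonalProjectionOnto‖ * ‖v‖ := (Fᗮ.orthogonalProjectionOnto).le_opNorm v
      _ ≤ 1 * ‖v‖ :=
          mul_le_mul_of_nonneg_right (Submodule.orthogonalProjectionOnto_norm_le (K := Fᗮ)) (norm_nonneg v)
      _ = ‖v‖ := one_mul _
  refine ⟨F, hFfin, hInv, P, (isSelfAdjoint_starProjection F).adjoint_eq, ?_, ?_, ?_⟩
  · ext v
    rw [ContinuousLinearMap.mul_apply, hPapply, hPapply,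
      Submodule.orthogonalProjectionOnto_mem_subspace_eq_self]
  · apply le_antisymm
    · rintro y ⟨v, rfl⟩
      exact (F.orthogonalProjectionOnto v).2
    · intro y hy
      exact ⟨y, hPy y hy⟩
  · intro x
    obtain ⟨c, hct, hxc⟩ : ∃ c ∈ t, K x ∈ Metric.ball (K c) (r / 3) := by
      have hx := ht (Set.mem_univ x)
      simpa using hx
    have key : ∀ v : E, ‖v‖ = 1 → ‖(K x - P * K x) v‖ ≤ 2 * r / 3 := by
      intro v hv
      obtain ⟨y, hyS, hy⟩ : ∃ y ∈ S c, K c v ∈ Metric.ball y (r / 3) := by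
        have hmem : K c v ∈ K c '' Metric.closedBall 0 1 :=
          ⟨v, by simpa [Metric.mem_closedBall] using hv.le, rfl⟩
        have := hSsub c hmem
        simpa using this
      have hyF : y ∈ F := hF₀F (Submodule.subset_span (Set.mem_biUnion hct hyS))
      have heq : (K x - P * K x) v = (K x v - y) - P (K x v - y) := by
        rw [map_sub, hPy y hyF]
        simp only [ContinuousLinearMap.sub_apply, ContinuousLinearMap.mul_apply]
        abel
      have h1 : ‖K x v - K c v‖ < r / 3 := by
        calc ‖K x v - K c v‖ = ‖(K x - K c) v‖ := by
              simp [ContinuousLinearMap.sub_apply]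
          _ ≤ ‖K x - K c‖ * ‖v‖ := (K x - K c).le_opNorm v
          _ = ‖K x - K c‖ := by rw [hv, mul_one]
          _ < r / 3 := by
              have := Metric.mem_ball.mp hxc
              rwa [dist_eq_norm] at this
      have h2 : ‖K c v - y‖ < r / 3 := by
        have := Metric.mem_ball.mp hy
        rwa [dist_eq_norm] at this
      have h3 : ‖K x v - y‖ ≤ ‖K x v - K c v‖ + ‖K c v - y‖ := norm_sub_le_norm_sub_add_norm_sub _ _ _
      rw [heq]
      calc ‖(K x v - y) - P (K x v - y)‖ ≤ ‖K x v - y‖ := hproj_le _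
        _ ≤ ‖K x v - K c v‖ + ‖K c v - y‖ := h3
        _ ≤ 2 * r / 3 := by linarith
    have hop : ‖K x - P * K x‖ ≤ 2 * r / 3 := by
      have h0 : (0 : ℝ) ≤ 2 * r / 3 := by positivity
      have hb := ContinuousLinearMap.opNorm_le_of_unit_norm
        (f := (K x - P * K x).restrictScalars ℝ) h0
        (fun v hv => by simpa using key v hv)
      rwa [ContinuousLinearMap.norm_restrictScalars] at hb
    calc ‖K x - P * K x‖ ≤ 2 * r / 3 := hop
      _ < r := by linarith
end
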